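/- arXiv:1308.0546 — 2 statements merged into one kernel-verified Lean document; each statement's English description precedes it below -/
import Mathlib

section
/- Let T be a semistandard tableau of skew shape, let T_1 be the result of a jeu de taquin slide applied to T starting at an inner corner I_1, and let T_2 be the result of a jeu de taquin slide applied to T_1 starting at an inner corner I_2 lying in the same row as I_1. Then on any row of T that contains boxes involved in the first slide and boxes involved in the second slide, the rightmost box involved in the second slide lies strictly to the left of the rightmost box involved in the first slide. -/
namespace Homomesy

/-- The next box of a jeu de taquin slide whose hole is currently at `b`:
whichever of the boxes below/right of `b` holds the smaller value (ties to below),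
boxes holding `0` being unavailable. -/
def fnext (f : ℕ × ℕ → ℕ) (b : ℕ × ℕ) : Option (ℕ × ℕ) :=
  let dn := (b.1 + 1, b.2)
  let rt := (b.1, b.2 + 1)
  if f dn ≠ 0 then
    if f rt ≠ 0 then (if f dn ≤ f rt then some dn else some rt) else some dn
  else if f rt ≠ 0 then some rt else none

/-- Perform a full jeu de taquin slide into the hole at `b` (with fuel). -/
def slideAux : (ℕ × ℕ → ℕ) → ℕ × ℕ → ℕ → (ℕ × ℕ → ℕ)
  | f, _, 0 => f
  | f, b, fuel + 1 =>
    match fnext f b with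
    | none => f
    | some c => slideAux (fun x => if x = b then f c else if x = c then 0 else f x) c fuel

/-- The list of boxes involved in the jeu de taquin slide into the hole at `b`. -/
def slidePath : (ℕ × ℕ → ℕ) → ℕ × ℕ → ℕ → List (ℕ × ℕ)
  | _, b, 0 => [b]
  | f, b, fuel + 1 =>
    match fnext f b with
    | none => [b]
    | some c => b :: slidePath (fun x => if x = b then f c else if x = c then 0 else f x) c fuel

/-- `f` is a semistandard Young tableau of skew shape `lam / mu`. -/
def IsSkewSSYT (lam mu : YoungDiagram) (f : ℕ × ℕ → ℕ) : Prop :=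
  mu ≤ lam ∧
  (∀ x ∈ lam.cells, x ∉ mu.cells → 1 ≤ f x) ∧
  (∀ x, x ∉ lam.cells → f x = 0) ∧
  (∀ x ∈ mu.cells, f x = 0) ∧
  (∀ i j, (i, j) ∈ lam.cells → (i, j) ∉ mu.cells → (i, j + 1) ∈ lam.cells →
    f (i, j) ≤ f (i, j + 1)) ∧
  (∀ i j, (i, j) ∈ lam.cells → (i, j) ∉ mu.cells → (i + 1, j) ∈ lam.cells →
    f (i, j) < f (i + 1, j))


theorem fnext_some {f : ℕ × ℕ → ℕ} {b c : ℕ × ℕ} (h : fnext f b = some c) :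
    (c = (b.1 + 1, b.2) ∨ c = (b.1, b.2 + 1)) ∧ f c ≠ 0 := by
  simp only [fnext] at h
  split_ifs at h <;> simp_all <;> subst h <;> simp_all

theorem fnext_rt {f : ℕ × ℕ → ℕ} {b : ℕ × ℕ} (h : fnext f b = some (b.1, b.2 + 1)) :
    f (b.1, b.2 + 1) ≠ 0 ∧ (f (b.1 + 1, b.2) = 0 ∨ f (b.1, b.2 + 1) < f (b.1 + 1, b.2)) := by
  have hne : ((b.1 + 1, b.2) : ℕ × ℕ) ≠ (b.1, b.2 + 1) := by simp [Prod.ext_iff]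
  simp only [fnext] at h
  split_ifs at h <;> simp_all [Prod.ext_iff] <;> omega

theorem fnext_congr {f g : ℕ × ℕ → ℕ} {b : ℕ × ℕ}
    (h : ∀ x : ℕ × ℕ, b.1 + b.2 < x.1 + x.2 → f x = g x) : fnext f b = fnext g b := by
  simp only [fnext]
  rw [h (b.1 + 1, b.2) (by simp), h (b.1, b.2 + 1) (by simp)]

def iterP (f : ℕ × ℕ → ℕ) (b : ℕ × ℕ) : ℕ → Option (ℕ × ℕ)
  | 0 => some b
  | n + 1 => (iterP f b n).bind (fnext f)

theorem iterP_none_mono {f : ℕ × ℕ → ℕ} {b : ℕ × ℕ} {n n' : ℕ} (h : iterP f b n = none)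
    (hle : n ≤ n') : iterP f b n' = none := by
  induction n', hle using Nat.le_induction with
  | base => exact h
  | succ k hk ih => rw [show iterP f b (k + 1) = (iterP f b k).bind (fnext f) from rfl, ih]; rfl

theorem iterP_some_of_le {f : ℕ × ℕ → ℕ} {b x : ℕ × ℕ} {n n' : ℕ}
    (h : iterP f b n' = some x) (hle : n ≤ n') : ∃ y, iterP f b n = some y := by
  cases hy : iterP f b n with
  | some y => exact ⟨y, rfl⟩
  | none => rw [iterP_none_mono hy hle] at h; exact absurd h (by simp)

theorem iterP_sum {f : ℕ × ℕ → ℕ} {b : ℕ × ℕ} : ∀ {n : ℕ} {x : ℕ × ℕ},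
    iterP f b n = some x → x.1 + x.2 = b.1 + b.2 + n := by
  intro n
  induction n with
  | zero => intro x h; simp [iterP] at h; subst h; rfl
  | succ k ih =>
    intro x h
    simp only [iterP, Option.bind_eq_some_iff] at h
    obtain ⟨y, hy, hxy⟩ := h
    obtain ⟨hc, -⟩ := fnext_some hxy
    have := ih hy
    rcases hc with h | h <;> subst h <;> simp <;> omega

theorem iterP_shift {f : ℕ × ℕ → ℕ} {b c : ℕ × ℕ} (h : fnext f b = some c) (n : ℕ) :
    iterP f b (n + 1) = iterP f c n := by
  induction n with
  | zero => simp [iterP, h]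
  | succ k ih =>
    rw [show iterP f b (k + 1 + 1) = (iterP f b (k + 1)).bind (fnext f) from rfl, ih]; rfl

theorem iterP_congr {f g : ℕ × ℕ → ℕ} {b : ℕ × ℕ}
    (h : ∀ x : ℕ × ℕ, b.1 + b.2 < x.1 + x.2 → f x = g x) (n : ℕ) :
    iterP f b n = iterP g b n := by
  induction n with
  | zero => rfl
  | succ k ih =>
    rw [show iterP f b (k + 1) = (iterP f b k).bind (fnext f) from rfl,
      show iterP g b (k + 1) = (iterP g b k).bind (fnext g) from rfl, ih]
    cases hy : iterP g b k with
    | none => rfl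
    | some y =>
      simp only [Option.bind_some]
      exact fnext_congr (fun x hx => h x (by have := iterP_sum hy; omega))

theorem iterP_step {f : ℕ × ℕ → ℕ} {b x x' : ℕ × ℕ} {n : ℕ} (h : iterP f b n = some x)
    (h' : iterP f b (n + 1) = some x') :
    (x' = (x.1 + 1, x.2) ∨ x' = (x.1, x.2 + 1)) ∧ f x' ≠ 0 := by
  simp only [iterP, h, Option.bind_some] at h'
  exact fnext_some h'

theorem iterP_mono {f : ℕ × ℕ → ℕ} {b x : ℕ × ℕ} {n : ℕ} (h : iterP f b n = some x) :
    ∀ {n' : ℕ} {x' : ℕ × ℕ}, n ≤ n' → iterP f b n' = some x' → x.1 ≤ x'.1 ∧ x.2 ≤ x'.2 := by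
  intro n'
  induction n' with
  | zero =>
    intro x' hle h'
    have : n = 0 := by omega
    subst this; rw [h] at h'; simp at h'; subst h'; exact ⟨le_refl _, le_refl _⟩
  | succ k ih =>
    intro x' hle h'
    rcases Nat.lt_or_ge n (k + 1) with hlt | hge
    · obtain ⟨y, hy⟩ := iterP_some_of_le h' (Nat.le_succ k)
      have h1 := ih (by omega) hy
      obtain ⟨hc, -⟩ := iterP_step hy h'
      rcases hc with h2 | h2 <;> subst h2 <;> simp <;> omega
    · have : n = k + 1 := by omega
      subst this; rw [h] at h'; simp at h'; subst h'; exact ⟨le_refl _, le_refl _⟩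

theorem iterP_rows_ivt {f : ℕ × ℕ → ℕ} {b : ℕ × ℕ} : ∀ {n : ℕ} {x : ℕ × ℕ},
    iterP f b n = some x → ∀ r, b.1 ≤ r → r ≤ x.1 →
      ∃ n' z, iterP f b n' = some z ∧ z.1 = r := by
  intro n
  induction n with
  | zero =>
    intro x h r h1 h2
    simp [iterP] at h; subst h
    exact ⟨0, b, rfl, by omega⟩
  | succ k ih =>
    intro x h r h1 h2
    obtain ⟨y, hy⟩ := iterP_some_of_le h (Nat.le_succ k)
    obtain ⟨hc, -⟩ := iterP_step hy h
    rcases Nat.lt_or_ge y.1 r with hlt | hge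
    · refine ⟨k + 1, x, h, ?_⟩
      rcases hc with h2' | h2' <;> subst h2' <;> simp at h2 ⊢ <;> omega
    · exact ih hy r h1 hge


theorem modify_agree {f : ℕ × ℕ → ℕ} {b c : ℕ × ℕ} (hc : fnext f b = some c) :
    ∀ x : ℕ × ℕ, c.1 + c.2 < x.1 + x.2 →
      (fun x => if x = b then f c else if x = c then 0 else f x) x = f x := by
  intro x hx
  obtain ⟨hc', -⟩ := fnext_some hc
  have hxb : x ≠ b := by
    rintro rfl
    rcases hc' with h | h <;> subst h <;> simp at hx <;> omega
  have hxc : x ≠ c := by rintro rfl; omega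
  simp [hxb, hxc]

theorem slidePath_congr : ∀ (fuel : ℕ) (f g : ℕ × ℕ → ℕ) (b : ℕ × ℕ),
    (∀ x : ℕ × ℕ, b.1 + b.2 < x.1 + x.2 → f x = g x) →
    slidePath f b fuel = slidePath g b fuel := by
  intro fuel
  induction fuel with
  | zero => intro f g b h; rfl
  | succ k ih =>
    intro f g b h
    have hfg : fnext f b = fnext g b := fnext_congr h
    rw [slidePath, slidePath, hfg]
    cases hc : fnext g b with
    | none => rfl
    | some c =>
      simp only []
      obtain ⟨hc', -⟩ := fnext_some hc
      have hsum : b.1 + b.2 < c.1 + c.2 := by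
        rcases hc' with h' | h' <;> subst h' <;> simp <;> omega
      refine congrArg (List.cons b) (ih _ _ c (fun x hx => ?_))
      have h1 := modify_agree (f := f) (hfg ▸ hc) x hx
      have h2 := modify_agree (f := g) hc x hx
      simp only at h1 h2
      rw [h1, h2]
      exact h x (by omega)

theorem mem_slidePath_iff : ∀ (fuel : ℕ) (f : ℕ × ℕ → ℕ) (b x : ℕ × ℕ),
    x ∈ slidePath f b fuel ↔ ∃ n ≤ fuel, iterP f b n = some x := by
  intro fuel
  induction fuel with
  | zero =>
    intro f b x
    simp only [slidePath, List.mem_singleton]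
    constructor
    · rintro rfl; exact ⟨0, le_refl _, rfl⟩
    · rintro ⟨n, hn, h⟩
      have : n = 0 := by omega
      subst this; simpa [iterP] using h.symm
  | succ k ih =>
    intro f b x
    rw [slidePath]
    cases hc : fnext f b with
    | none =>
      simp only [List.mem_singleton]
      constructor
      · rintro rfl; exact ⟨0, by omega, rfl⟩
      · rintro ⟨n, hn, h⟩
        cases n with
        | zero => simpa [iterP] using h.symm
        | succ m =>
          have h1 : iterP f b 1 = none := by simp [iterP, hc]
          rw [iterP_none_mono h1 (by omega)] at h
          exact absurd h (by simp)
    | some c =>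
      simp only [List.mem_cons]
      have hrw : slidePath (fun x => if x = b then f c else if x = c then 0 else f x) c k =
          slidePath f c k := slidePath_congr k _ f c (modify_agree hc)
      rw [hrw, ih]
      constructor
      · rintro (rfl | ⟨n, hn, h⟩)
        · exact ⟨0, by omega, rfl⟩
        · exact ⟨n + 1, by omega, by rw [iterP_shift hc]; exact h⟩
      · rintro ⟨n, hn, h⟩
        cases n with
        | zero => left; simpa [iterP] using h.symm
        | succ m => right; exact ⟨m, by omega, by rw [← iterP_shift hc]; exact h⟩

theorem slideAux_not_mem : ∀ (fuel : ℕ) (f : ℕ × ℕ → ℕ) (b x : ℕ × ℕ),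
    (∀ n ≤ fuel, iterP f b n ≠ some x) → slideAux f b fuel x = f x := by
  intro fuel
  induction fuel with
  | zero => intro f b x _; rfl
  | succ k ih =>
    intro f b x hx
    rw [slideAux]
    cases hc : fnext f b with
    | none => rfl
    | some c =>
      simp only []
      have hxb : x ≠ b := fun h => hx 0 (by omega) (by simp [iterP, h])
      have hxc : x ≠ c := fun h => hx 1 (by omega) (by simp [iterP, hc, h])
      have : slideAux (fun x => if x = b then f c else if x = c then 0 else f x) c k x =
          (fun x => if x = b then f c else if x = c then 0 else f x) x := by
        refine ih _ c x (fun n hn h => ?_)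
        rw [iterP_congr (modify_agree hc) n, ← iterP_shift hc] at h
        exact hx (n + 1) (by omega) h
      rw [this]
      simp [hxb, hxc]

theorem slideAux_mid : ∀ (fuel : ℕ) (f : ℕ × ℕ → ℕ) (b : ℕ × ℕ) (n : ℕ) (x y : ℕ × ℕ),
    n < fuel → iterP f b n = some x → iterP f b (n + 1) = some y →
    slideAux f b fuel x = f y := by
  intro fuel
  induction fuel with
  | zero => intro f b n x y h; omega
  | succ k ih =>
    intro f b n x y hn hx hy
    rw [slideAux]
    cases hc : fnext f b with
    | none =>
      exfalso
      have h1 : iterP f b 1 = none := by simp [iterP, hc]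
      rw [iterP_none_mono h1 (by omega)] at hy
      exact absurd hy (by simp)
    | some c =>
      simp only []
      cases n with
      | zero =>
        have hx' : x = b := by simpa [iterP] using hx.symm
        have hy' : y = c := by
          rw [iterP_shift hc 0] at hy; simpa [iterP] using hy.symm
        have : slideAux (fun z => if z = b then f c else if z = c then 0 else f z) c k x =
            (fun z => if z = b then f c else if z = c then 0 else f z) x := by
          refine slideAux_not_mem k _ c x (fun m hm h => ?_)
          rw [iterP_congr (modify_agree hc) m, ← iterP_shift hc] at h
          have := iterP_sum h
          rw [hx'] at this
          omega
        rw [this, hx', hy']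
        simp
      | succ m =>
        rw [iterP_shift hc] at hx hy
        rw [← iterP_congr (modify_agree hc)] at hx hy
        have := ih _ c m x y (by omega) hx hy
        rw [this]
        rw [iterP_congr (modify_agree hc)] at hx hy
        have h1 := iterP_sum hy
        have hcsum : c.1 + c.2 = b.1 + b.2 + 1 := by
          rcases (fnext_some hc).1 with h | h <;> subst h <;> simp <;> omega
        have hyb : y ≠ b := by intro h; rw [h] at h1; omega
        have hyc : y ≠ c := by intro h; rw [h] at h1; omega
        simp [hyb, hyc]

theorem slideAux_last : ∀ (fuel : ℕ) (f : ℕ × ℕ → ℕ) (b : ℕ × ℕ) (n : ℕ) (x : ℕ × ℕ),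
    f b = 0 → n ≤ fuel → iterP f b n = some x →
    (n = fuel ∨ iterP f b (n + 1) = none) →
    slideAux f b fuel x = 0 := by
  intro fuel
  induction fuel with
  | zero =>
    intro f b n x hb hn hx _
    have : n = 0 := by omega
    subst this
    have : x = b := by simpa [iterP] using hx.symm
    subst this
    simpa [slideAux] using hb
  | succ k ih =>
    intro f b n x hb hn hx hlast
    rw [slideAux]
    cases hc : fnext f b with
    | none =>
      cases n with
      | zero =>
        have : x = b := by simpa [iterP] using hx.symm
        subst this; exact hb
      | succ m =>
        exfalso
        have h1 : iterP f b 1 = none := by simp [iterP, hc]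
        rw [iterP_none_mono h1 (by omega)] at hx
        exact absurd hx (by simp)
    | some c =>
      simp only []
      cases n with
      | zero =>
        exfalso
        have : x = b := by simpa [iterP] using hx.symm
        rcases hlast with h | h
        · omega
        · rw [iterP_shift hc 0] at h; simp [iterP] at h
      | succ m =>
        rw [iterP_shift hc] at hx
        rw [← iterP_congr (modify_agree hc)] at hx
        have hcb : c ≠ b := by
          rcases (fnext_some hc).1 with h | h <;> subst h <;> simp [Prod.ext_iff]
        refine ih _ c m x (by simp [hcb]) (by omega) hx ?_
        rcases hlast with h | h
        · left; omega
        · right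
          rw [iterP_shift hc] at h
          rw [← iterP_congr (modify_agree hc)] at h
          exact h

theorem iterP_exists_none (lam : YoungDiagram) (f : ℕ × ℕ → ℕ)
    (hlam : ∀ x, x ∉ lam.cells → f x = 0) (b : ℕ × ℕ) :
    ∃ n ≤ lam.cells.card + 1, iterP f b n = none := by
  by_contra hcon
  push_neg at hcon
  have hsome : ∀ n, n < lam.cells.card + 1 → ∃ z, iterP f b (n + 1) = some z := by
    intro n hn
    cases h : iterP f b (n + 1) with
    | none => exact absurd h (hcon (n + 1) (by omega))
    | some z => exact ⟨z, rfl⟩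
  have hcard := Finset.card_le_card_of_injOn
    (f := fun n => (iterP f b (n + 1)).getD (0, 0))
    (s := Finset.range (lam.cells.card + 1)) (t := lam.cells)
    (by
      intro n hn
      rw [Finset.coe_range, Set.mem_Iio] at hn
      obtain ⟨z, hz⟩ := hsome n hn
      obtain ⟨w, hw⟩ := iterP_some_of_le hz (Nat.le_succ n)
      have hz0 := (iterP_step hw hz).2
      show (iterP f b (n + 1)).getD (0, 0) ∈ lam.cells
      rw [hz]
      simp only [Option.getD_some]
      by_contra hnot
      exact hz0 (hlam _ hnot))
    (by
      intro n hn n' hn' h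
      rw [Finset.coe_range, Set.mem_Iio] at hn hn'
      obtain ⟨z, hz⟩ := hsome n hn
      obtain ⟨z', hz'⟩ := hsome n' hn'
      have h : (iterP f b (n + 1)).getD (0, 0) = (iterP f b (n' + 1)).getD (0, 0) := h
      rw [hz, hz'] at h
      simp only [Option.getD_some] at h
      have h1 := iterP_sum hz
      have h2 := iterP_sum hz'
      rw [h] at h1
      omega)
  rw [Finset.card_range] at hcard
  omega

theorem rowmax_exists {f : ℕ × ℕ → ℕ} {b : ℕ × ℕ} {t : ℕ} (ht : iterP f b (t + 1) = none)
    {n0 : ℕ} {z0 : ℕ × ℕ} (h0 : iterP f b n0 = some z0) :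
    ∃ N z, iterP f b N = some z ∧ z.1 = z0.1 ∧
      (∀ n' c', iterP f b n' = some (z.1, c') → c' ≤ z.2) ∧
      (iterP f b (N + 1) = none ∨ iterP f b (N + 1) = some (z.1 + 1, z.2)) := by
  classical
  have hle : ∀ n (z : ℕ × ℕ), iterP f b n = some z → n ≤ t := by
    intro n z h
    by_contra hn
    rw [iterP_none_mono ht (by omega)] at h
    exact absurd h (by simp)
  have hN : ∃ c', iterP f b (Nat.findGreatest (fun n => ∃ c', iterP f b n = some (z0.1, c')) t)
      = some (z0.1, c') :=
    Nat.findGreatest_spec (P := fun n => ∃ c', iterP f b n = some (z0.1, c'))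
      (hle n0 z0 h0) ⟨z0.2, h0⟩
  set N := Nat.findGreatest (fun n => ∃ c', iterP f b n = some (z0.1, c')) t with hNdef
  obtain ⟨c, hc⟩ := hN
  refine ⟨N, (z0.1, c), hc, rfl, ?_, ?_⟩
  · intro n' c' h'
    have hn't : n' ≤ t := hle _ _ h'
    have hn'N : n' ≤ N := by
      by_contra hgt
      exact absurd ⟨c', h'⟩
        (Nat.findGreatest_is_greatest (P := fun n => ∃ c', iterP f b n = some (z0.1, c'))
          (by rw [← hNdef]; omega) hn't)
    exact (iterP_mono h' hn'N hc).2
  · cases hnext : iterP f b (N + 1) with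
    | none => left; rfl
    | some y =>
      right
      obtain ⟨hy, -⟩ := iterP_step hc hnext
      rcases hy with h | h
      · rw [h]
      · exfalso
        have hpred : ∃ c', iterP f b (N + 1) = some (z0.1, c') := ⟨c + 1, by rw [hnext, h]⟩
        have hN1t : N + 1 ≤ t := hle _ _ hnext
        exact absurd hpred
          (Nat.findGreatest_is_greatest (P := fun n => ∃ c', iterP f b n = some (z0.1, c'))
            (by rw [← hNdef]; omega) hN1t)


theorem stmt4 (lam mu : YoungDiagram) (f : ℕ × ℕ → ℕ) (hf : IsSkewSSYT lam mu f)
    (I1 I2 : ℕ × ℕ)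
    (h1 : I1 ∈ mu.cells ∧ (I1.1 + 1, I1.2) ∉ mu.cells ∧ (I1.1, I1.2 + 1) ∉ mu.cells)
    (hrow : I2.1 = I1.1) (hne : I2 ≠ I1)
    (h2 : I2 ∈ mu.cells ∧ ((I2.1 + 1, I2.2) ∉ mu.cells ∨ (I2.1 + 1, I2.2) = I1) ∧
      ((I2.1, I2.2 + 1) ∉ mu.cells ∨ (I2.1, I2.2 + 1) = I1)) :
    ∀ r : ℕ,
      (∃ b ∈ slidePath f I1 (lam.cells.card + 1), b.1 = r) →
      (∃ b ∈ slidePath (slideAux f I1 (lam.cells.card + 1)) I2 (lam.cells.card + 1), b.1 = r) →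
      ∀ b2 ∈ slidePath (slideAux f I1 (lam.cells.card + 1)) I2 (lam.cells.card + 1), b2.1 = r →
        ∃ b1 ∈ slidePath f I1 (lam.cells.card + 1), b1.1 = r ∧ b2.2 < b1.2 := by
  classical
  obtain ⟨hsub, hpos, hout, hmu0, hrowle, hcollt⟩ := hf
  obtain ⟨hI1mu, hI1dn, hI1rt⟩ := h1
  obtain ⟨hI2mu, hI2dn', hI2rt'⟩ := h2
  -- basic combinatorial facts about the corners
  have hc2le : I2.2 ≤ I1.2 := by
    by_contra hgt
    apply hI1rt
    rw [YoungDiagram.mem_cells] at hI2mu ⊢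
    exact mu.up_left_mem (le_of_eq hrow.symm) (by omega)
      (show ((I2.1, I2.2) : ℕ × ℕ) ∈ mu from hI2mu)
  have hc2 : I2.2 < I1.2 := by
    rcases Nat.lt_or_ge I2.2 I1.2 with h | h
    · exact h
    · exact absurd (Prod.ext_iff.mpr ⟨hrow, by omega⟩) hne
  have hI2dn : (I1.1 + 1, I2.2) ∉ mu.cells := by
    rcases hI2dn' with h | h
    · rw [hrow] at h; exact h
    · exfalso
      have := congrArg Prod.fst h
      simp only at this
      omega
  have hmu_free : ∀ i j, I1.1 < i → I2.2 ≤ j → (i, j) ∉ mu.cells := by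
    intro i j hi hj hmem
    apply hI2dn
    rw [YoungDiagram.mem_cells] at hmem ⊢
    exact mu.up_left_mem (by omega) hj hmem
  have hfne : ∀ z : ℕ × ℕ, f z ≠ 0 → z ∈ lam.cells ∧ z ∉ mu.cells := by
    intro z hz
    constructor
    · by_contra h; exact hz (hout z h)
    · intro h; exact hz (hmu0 z h)
  set F := lam.cells.card + 1 with hFdef
  set f1 := slideAux f I1 F with hf1def
  -- termination of the first slide
  have hex : ∃ n, iterP f I1 n = none := by
    obtain ⟨M, _, hM⟩ := iterP_exists_none lam f hout I1
    exact ⟨M, hM⟩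
  set m := Nat.find hex with hmdef
  have hm_spec : iterP f I1 m = none := Nat.find_spec hex
  have hm_pos : m ≠ 0 := by
    intro h
    rw [h] at hm_spec
    simp [iterP] at hm_spec
  have hm_le : m ≤ F := by
    obtain ⟨M, hMle, hM⟩ := iterP_exists_none lam f hout I1
    exact le_trans (Nat.find_min' hex hM) hMle
  set t := m - 1 with htdef
  have ht : iterP f I1 (t + 1) = none := by
    rw [show t + 1 = m by omega]
    exact hm_spec
  have ht_le : t + 1 ≤ F := by omega
  have hsome_le : ∀ n (z : ℕ × ℕ), iterP f I1 n = some z → n ≤ t := by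
    intro n z h
    by_contra hn
    rw [iterP_none_mono ht (by omega)] at h
    exact absurd h (by simp)
  -- characterization of f1
  have hf1_not : ∀ x : ℕ × ℕ, (∀ n ≤ F, iterP f I1 n ≠ some x) → f1 x = f x := fun x h =>
    slideAux_not_mem F f I1 x h
  have hf1_mid : ∀ (n : ℕ) (x y : ℕ × ℕ), iterP f I1 n = some x → iterP f I1 (n + 1) = some y →
      f1 x = f y := by
    intro n x y h h'
    exact slideAux_mid F f I1 n x y (by have := hsome_le n x h; omega) h h'
  have hf1_last : ∀ (n : ℕ) (x : ℕ × ℕ), iterP f I1 n = some x → iterP f I1 (n + 1) = none →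
      f1 x = 0 := by
    intro n x h h'
    exact slideAux_last F f I1 n x (hmu0 I1 hI1mu) (by have := hsome_le n x h; omega) h
      (Or.inr h')
  have hfnext : ∀ (k : ℕ) (w x : ℕ × ℕ), iterP f1 I2 k = some w →
      iterP f1 I2 (k + 1) = some x → fnext f1 w = some x := by
    intro k w x h1' h2'
    rw [show iterP f1 I2 (k + 1) = (iterP f1 I2 k).bind (fnext f1) from rfl, h1'] at h2'
    exact h2'
  -- the main invariant along the second slide path
  have key : ∀ (j : ℕ) (x : ℕ × ℕ), iterP f1 I2 j = some x →
      ∀ (N : ℕ) (z : ℕ × ℕ), iterP f I1 N = some z → z.1 = x.1 →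
        (∀ n' c', iterP f I1 n' = some (z.1, c') → c' ≤ z.2) →
        (iterP f I1 (N + 1) = none ∨ iterP f I1 (N + 1) = some (z.1 + 1, z.2)) →
        x.2 < z.2 := by
    intro j
    induction j with
    | zero =>
      intro x hx N z hPN hzrow hmax _
      have hxI2 : x = I2 := by simpa [iterP] using hx.symm
      subst hxI2
      have h1' : iterP f I1 0 = some (z.1, I1.2) := by
        rw [hzrow, hrow]
        exact rfl
      have := hmax 0 I1.2 h1'
      omega
    | succ k ih =>
      intro x hx N z hPN hzrow hmax hnext
      obtain ⟨w, hw⟩ := iterP_some_of_le hx (Nat.le_succ k)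
      have hstep := iterP_step hw hx
      have hQrow : I2.1 ≤ w.1 ∧ I2.2 ≤ w.2 :=
        iterP_mono (show iterP f1 I2 0 = some I2 from rfl) (Nat.zero_le k) hw
      have hPcol : I1.1 ≤ z.1 ∧ I1.2 ≤ z.2 :=
        iterP_mono (show iterP f I1 0 = some I1 from rfl) (Nat.zero_le N) hPN
      rcases hstep.1 with hdn | hrt
      · -- the second path moved down
        subst hdn
        have hzrow' : z.1 = w.1 + 1 := hzrow
        show w.2 < z.2
        -- find a row-max of the first path in row w.1
        obtain ⟨n₁, z₁, hz₁, hz₁row⟩ :=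
          iterP_rows_ivt hPN w.1 (by omega) (by omega)
        obtain ⟨N₂, z₂, hPN₂, hz₂row, hmax₂, hnext₂⟩ := rowmax_exists ht hz₁
        have hw2 : w.2 < z₂.2 := ih w hw N₂ z₂ hPN₂ (by omega) hmax₂ hnext₂
        rcases hnext₂ with hnone | hdn₂
        · exfalso
          have hNN : N₂ < N := by
            by_contra hle'
            have := (iterP_mono hPN (by omega) hPN₂).1
            omega
          rw [iterP_none_mono hnone (by omega : N₂ + 1 ≤ N)] at hPN
          exact absurd hPN (by simp)
        · have hz2w : z₂.1 = w.1 := by omega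
          have harg : iterP f I1 (N₂ + 1) = some (z.1, z₂.2) := by
            rw [hdn₂, hz2w, hzrow']
          have := hmax (N₂ + 1) z₂.2 harg
          omega
      · -- the second path moved right: the crucial case
        subst hrt
        have hzrow' : z.1 = w.1 := hzrow
        show w.2 + 1 < z.2
        have hw2 : w.2 < z.2 := ih w hw N z hPN (by omega) hmax hnext
        by_contra hcon
        push_neg at hcon
        have hz2 : z.2 = w.2 + 1 := by omega
        have hzeq : z = (w.1, w.2 + 1) := Prod.ext_iff.mpr ⟨hzrow, hz2⟩
        have hfnw : fnext f1 w = some (w.1, w.2 + 1) := hfnext k w _ hw hx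
        obtain ⟨hrtne, hrtcmp⟩ := fnext_rt hfnw
        rcases hnext with hnone | hdnN
        · exact hrtne (hzeq ▸ hf1_last N z hPN hnone)
        · have hf1z : f1 z = f (z.1 + 1, z.2) := hf1_mid N z _ hPN hdnN
          have hyne : f (z.1 + 1, z.2) ≠ 0 := (iterP_step hPN hdnN).2
          obtain ⟨hylam, hymu⟩ := hfne _ hyne
          have hdn_notpath : ∀ n ≤ F, iterP f I1 n ≠ some (w.1 + 1, w.2) := by
            intro n _ hcontr
            rcases le_or_gt n N with h' | h'
            · have h2' : w.1 + 1 ≤ z.1 := (iterP_mono hcontr h' hPN).1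
              omega
            · have h2' : z.2 ≤ w.2 := (iterP_mono hdnN (by omega) hcontr).2
              omega
          have hf1dn : f1 (w.1 + 1, w.2) = f (w.1 + 1, w.2) :=
            hf1_not _ hdn_notpath
          have hdnmu : (w.1 + 1, w.2) ∉ mu.cells := hmu_free _ _ (by omega) (by omega)
          have hdnlam : (w.1 + 1, w.2) ∈ lam.cells := by
            rw [YoungDiagram.mem_cells] at hylam ⊢
            exact lam.up_left_mem (by omega) (by omega)
              (show ((z.1 + 1, z.2) : ℕ × ℕ) ∈ lam from hylam)
          have hdnpos : 1 ≤ f (w.1 + 1, w.2) := hpos _ hdnlam hdnmu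
          have hle' : f (w.1 + 1, w.2) ≤ f (w.1 + 1, w.2 + 1) := by
            refine hrowle (w.1 + 1) w.2 hdnlam hdnmu ?_
            have : ((z.1 + 1, z.2) : ℕ × ℕ) = (w.1 + 1, w.2 + 1) := by
              rw [hzeq]
            rw [← this]
            exact hylam
          have hyval : f1 (w.1, w.2 + 1) = f (w.1 + 1, w.2 + 1) := by
            rw [← hzeq, hf1z, hzeq]
          rcases hrtcmp with h0 | hlt
          · rw [hf1dn] at h0; omega
          · rw [hf1dn, hyval] at hlt
            omega
  -- assemble the statement
  intro r hr1 _ b2 hb2 hb2r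
  obtain ⟨b0, hb0mem, hb0r⟩ := hr1
  rw [mem_slidePath_iff] at hb0mem
  obtain ⟨n0, _, hPn0⟩ := hb0mem
  obtain ⟨N, z, hPN, hzrow, hmax, hnext⟩ := rowmax_exists ht hPn0
  rw [mem_slidePath_iff] at hb2
  obtain ⟨j, _, hQj⟩ := hb2
  have hlt := key j b2 hQj N z hPN (by omega) hmax hnext
  refine ⟨z, ?_, by omega, hlt⟩
  rw [mem_slidePath_iff]
  exact ⟨N, by have := hsome_le N z hPN; omega, hPN⟩


end Homomesy
end

section
/- For any partition λ, any q with 0 ≤ q < |λ|, and any T ∈ Inc^q(λ), K-evacuation is an involution and conjugates K-promotion to its inverse: E_K(E_K(T)) = T and E_K(P_K(T)) = P_K^{−1}(E_K(T)). -/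
namespace Homomesy

/-- Two boxes are adjacent when they share an edge. -/
def adj (x y : ℕ × ℕ) : Prop :=
  (x.1 = y.1 ∧ (x.2 = y.2 + 1 ∨ y.2 = x.2 + 1)) ∨
  (x.2 = y.2 ∧ (x.1 = y.1 + 1 ∨ y.1 = x.1 + 1))

instance : DecidableRel adj := fun x y => by unfold adj; infer_instance

/-- `switch_{i,•}` (the bullet `•` is encoded by `0`): simultaneously, each box
labeled `•` adjacent to a box labeled `i` is relabeled `i`, and each box labeled `i`
adjacent to a box labeled `•` is relabeled `•`. -/
def kswitch (shape : Finset (ℕ × ℕ)) (i : ℕ) (g : ℕ × ℕ → ℕ) : ℕ × ℕ → ℕ := fun x =>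
  if x ∈ shape ∧ g x = 0 ∧ ∃ y ∈ shape, adj x y ∧ g y = i then i
  else if x ∈ shape ∧ g x = i ∧ ∃ y ∈ shape, adj x y ∧ g y = 0 then 0
  else g x

/-- K-promotion of an increasing tableau with entries `{1, …, d}`: replace each `1`
by `•`, apply `switch_{2,•}, …, switch_{d,•}` successively, decrement all numeric
labels and replace each `•` by `d`. -/
def kpromote (shape : Finset (ℕ × ℕ)) (d : ℕ) (f : ℕ × ℕ → ℕ) : ℕ × ℕ → ℕ :=
  let f1 : ℕ × ℕ → ℕ := fun x => if f x = 1 then 0 else f x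
  let g := (List.range (d - 1)).foldl (fun h i => kswitch shape (i + 2) h) f1
  fun x => if x ∈ shape then (if g x = 0 then d else g x - 1) else 0

/-- `f` is an increasing tableau of shape `shape` with entry set exactly `{1, …, d}`. -/
def IsInc (shape : Finset (ℕ × ℕ)) (d : ℕ) (f : ℕ × ℕ → ℕ) : Prop :=
  (∀ x, x ∉ shape → f x = 0) ∧
  (∀ i j, (i, j) ∈ shape → (i, j + 1) ∈ shape → f (i, j) < f (i, j + 1)) ∧
  (∀ i j, (i, j) ∈ shape → (i + 1, j) ∈ shape → f (i, j) < f (i + 1, j)) ∧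
  (∀ x ∈ shape, 1 ≤ f x ∧ f x ≤ d) ∧
  (∀ v, 1 ≤ v → v ≤ d → ∃ x ∈ shape, f x = v)

/-- K-evacuation: the increasing tableau encoded by the chain of Young diagrams
`(P_K^[d-j] T)_{≤ j}` for `0 ≤ j ≤ d`; its entry at a box `x` is the least `j` whose
diagram contains `x`. -/
def kevac (shape : Finset (ℕ × ℕ)) (d : ℕ) (f : ℕ × ℕ → ℕ) : ℕ × ℕ → ℕ := fun x =>
  if x ∈ shape then
    if h : ((Finset.Icc 1 d).filter fun j => (kpromote shape d)^[d - j] f x ≤ j).Nonempty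
    then ((Finset.Icc 1 d).filter fun j => (kpromote shape d)^[d - j] f x ≤ j).min' h
    else 0
  else 0


lemma adj_symm {x y : ℕ × ℕ} (h : adj x y) : adj y x := by unfold adj at *; tauto
variable (shape : Finset (ℕ × ℕ))
def upC (i : ℕ) (f : ℕ × ℕ → ℕ) (x : ℕ × ℕ) : Prop :=
  x ∈ shape ∧ f x = i ∧ ¬∃ y ∈ shape, adj x y ∧ f y = i + 1
def dnC (i : ℕ) (f : ℕ × ℕ → ℕ) (x : ℕ × ℕ) : Prop :=
  x ∈ shape ∧ f x = i + 1 ∧ ¬∃ y ∈ shape, adj x y ∧ f y = i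
instance (i f x) : Decidable (upC shape i f x) := by unfold upC; infer_instance
instance (i f x) : Decidable (dnC shape i f x) := by unfold dnC; infer_instance
def rho (i : ℕ) (f : ℕ × ℕ → ℕ) : ℕ × ℕ → ℕ := fun x =>
  if upC shape i f x then i + 1 else if dnC shape i f x then i else f x
lemma rho_not_mem {i f} {x} (hx : x ∉ shape) : rho shape i f x = f x := by
  unfold rho; rw [if_neg (fun h => hx h.1), if_neg (fun h => hx h.1)]
lemma rho_eq_iff {i v : ℕ} (h1 : v ≠ i) (h2 : v ≠ i + 1) (f) (y) :
    (rho shape i f y = v ↔ f y = v) := by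
  unfold rho
  split_ifs with a b
  · have := a.2.1; constructor <;> intro hv <;> omega
  · have := b.2.1; constructor <;> intro hv <;> omega
  · rfl
lemma rho_le_iff {i j : ℕ} (h : i ≠ j) (f) (x) :
    (rho shape i f x ≤ j ↔ f x ≤ j) := by
  unfold rho
  split_ifs with a b
  · obtain ⟨_, ha, _⟩ := a; omega
  · obtain ⟨_, hb, _⟩ := b; omega
  · rfl

-- NEW PART
lemma rho_of_upC {i f x} (h : upC shape i f x) : rho shape i f x = i + 1 := by
  unfold rho; rw [if_pos h]
lemma not_upC_of_dnC {i f x} (h : dnC shape i f x) : ¬ upC shape i f x := by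
  intro h'; have := h.2.1; have := h'.2.1; omega
lemma rho_of_dnC {i f x} (h : dnC shape i f x) : rho shape i f x = i := by
  unfold rho; rw [if_neg (not_upC_of_dnC shape h), if_pos h]
lemma rho_of_else {i f x} (h1 : ¬ upC shape i f x) (h2 : ¬ dnC shape i f x) :
    rho shape i f x = f x := by
  unfold rho; rw [if_neg h1, if_neg h2]

lemma upC_congr {i} {g g' : ℕ × ℕ → ℕ}
    (hv : ∀ y v, v = i ∨ v = i + 1 → (g y = v ↔ g' y = v)) (x) :
    upC shape i g x ↔ upC shape i g' x := by
  unfold upC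
  constructor <;> rintro ⟨hm, he, hn⟩
  · exact ⟨hm, (hv x i (Or.inl rfl)).1 he, fun ⟨y, hy, ha, hvy⟩ =>
      hn ⟨y, hy, ha, (hv y (i+1) (Or.inr rfl)).2 hvy⟩⟩
  · exact ⟨hm, (hv x i (Or.inl rfl)).2 he, fun ⟨y, hy, ha, hvy⟩ =>
      hn ⟨y, hy, ha, (hv y (i+1) (Or.inr rfl)).1 hvy⟩⟩
lemma dnC_congr {i} {g g' : ℕ × ℕ → ℕ}
    (hv : ∀ y v, v = i ∨ v = i + 1 → (g y = v ↔ g' y = v)) (x) :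
    dnC shape i g x ↔ dnC shape i g' x := by
  unfold dnC
  constructor <;> rintro ⟨hm, he, hn⟩
  · exact ⟨hm, (hv x (i+1) (Or.inr rfl)).1 he, fun ⟨y, hy, ha, hvy⟩ =>
      hn ⟨y, hy, ha, (hv y i (Or.inl rfl)).2 hvy⟩⟩
  · exact ⟨hm, (hv x (i+1) (Or.inr rfl)).2 he, fun ⟨y, hy, ha, hvy⟩ =>
      hn ⟨y, hy, ha, (hv y i (Or.inl rfl)).1 hvy⟩⟩

lemma rho_comm {i j : ℕ} (h : i + 2 ≤ j) (f) :
    rho shape i (rho shape j f) = rho shape j (rho shape i f) := by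
  funext x
  have keyi : ∀ y v, v = i ∨ v = i + 1 → (rho shape j f y = v ↔ f y = v) := by
    rintro y v hv; exact rho_eq_iff shape (by omega) (by omega) f y
  have keyj : ∀ y v, v = j ∨ v = j + 1 → (rho shape i f y = v ↔ f y = v) := by
    rintro y v hv; exact rho_eq_iff shape (by omega) (by omega) f y
  have ci := upC_congr shape keyi x
  have di := dnC_congr shape keyi x
  have cj := upC_congr shape keyj x
  have dj := dnC_congr shape keyj x
  by_cases A : upC shape i f x
  · have hfx := A.2.1
    have nC : ¬ upC shape j f x := fun C => by have := C.2.1; omega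
    have nD : ¬ dnC shape j f x := fun D => by have := D.2.1; omega
    rw [rho_of_upC shape (ci.2 A),
      rho_of_else shape (fun hh => nC (cj.1 hh)) (fun hh => nD (dj.1 hh)),
      rho_of_upC shape A]
  · by_cases B : dnC shape i f x
    · have hfx := B.2.1
      have nC : ¬ upC shape j f x := fun C => by have := C.2.1; omega
      have nD : ¬ dnC shape j f x := fun D => by have := D.2.1; omega
      rw [rho_of_dnC shape (di.2 B),
        rho_of_else shape (fun hh => nC (cj.1 hh)) (fun hh => nD (dj.1 hh)),
        rho_of_dnC shape B]
    · rw [rho_of_else shape (fun hh => A (ci.1 hh)) (fun hh => B (di.1 hh))]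
      by_cases C : upC shape j f x
      · rw [rho_of_upC shape C, rho_of_upC shape (cj.2 C)]
      · by_cases D : dnC shape j f x
        · rw [rho_of_dnC shape D, rho_of_dnC shape (dj.2 D)]
        · rw [rho_of_else shape C D,
            rho_of_else shape (fun hh => C (cj.1 hh)) (fun hh => D (dj.1 hh)),
            rho_of_else shape A B]

lemma rho_invol {i : ℕ} {f : ℕ × ℕ → ℕ}
    (H : ∀ x y, x ∈ shape → y ∈ shape → adj x y → f x ≠ f y) :
    rho shape i (rho shape i f) = f := by
  funext x
  by_cases hm : x ∈ shape
  swap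
  · rw [rho_not_mem shape hm, rho_not_mem shape hm]
  set g := rho shape i f with hg
  by_cases A : upC shape i f x
  · have hgx : g x = i + 1 := rho_of_upC shape A
    have hd : dnC shape i g x := by
      refine ⟨hm, hgx, ?_⟩
      rintro ⟨y, hy, ha, hvy⟩
      by_cases Uy : upC shape i f y
      · rw [hg, rho_of_upC shape Uy] at hvy; omega
      · by_cases Dy : dnC shape i f y
        · exact Dy.2.2 ⟨x, hm, adj_symm ha, A.2.1⟩
        · rw [hg, rho_of_else shape Uy Dy] at hvy
          exact H x y hm hy ha (by rw [A.2.1, hvy])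
    rw [rho_of_dnC shape hd, A.2.1]
  · by_cases B : dnC shape i f x
    · have hgx : g x = i := rho_of_dnC shape B
      have hu : upC shape i g x := by
        refine ⟨hm, hgx, ?_⟩
        rintro ⟨y, hy, ha, hvy⟩
        by_cases Uy : upC shape i f y
        · exact Uy.2.2 ⟨x, hm, adj_symm ha, B.2.1⟩
        · by_cases Dy : dnC shape i f y
          · rw [hg, rho_of_dnC shape Dy] at hvy; omega
          · rw [hg, rho_of_else shape Uy Dy] at hvy
            exact H x y hm hy ha (by rw [B.2.1, hvy])
      rw [rho_of_upC shape hu, B.2.1]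
    · have hgx : g x = f x := rho_of_else shape A B
      by_cases hfi : f x = i
      · have hE : ∃ y ∈ shape, adj x y ∧ f y = i + 1 := by
          by_contra hE; exact A ⟨hm, hfi, hE⟩
        obtain ⟨y0, hy0, ha0, hv0⟩ := hE
        have hgy0 : g y0 = i + 1 := by
          have nu : ¬ upC shape i f y0 := fun hu => by have := hu.2.1; omega
          have nd : ¬ dnC shape i f y0 :=
            fun hd => hd.2.2 ⟨x, hm, adj_symm ha0, hfi⟩
          rw [hg, rho_of_else shape nu nd, hv0]
        have nu : ¬ upC shape i g x :=
          fun hu => hu.2.2 ⟨y0, hy0, ha0, hgy0⟩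
        have nd : ¬ dnC shape i g x := fun hd => by
          have := hd.2.1; rw [hgx, hfi] at this; omega
        rw [rho_of_else shape nu nd, hgx]
      · by_cases hfi1 : f x = i + 1
        · have hE : ∃ y ∈ shape, adj x y ∧ f y = i := by
            by_contra hE; exact B ⟨hm, hfi1, hE⟩
          obtain ⟨y0, hy0, ha0, hv0⟩ := hE
          have hgy0 : g y0 = i := by
            have nu : ¬ upC shape i f y0 :=
              fun hu => hu.2.2 ⟨x, hm, adj_symm ha0, hfi1⟩
            have nd : ¬ dnC shape i f y0 := fun hd => by have := hd.2.1; omega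
            rw [hg, rho_of_else shape nu nd, hv0]
          have nu : ¬ upC shape i g x := fun hu => by
            have := hu.2.1; rw [hgx, hfi1] at this; omega
          have nd : ¬ dnC shape i g x :=
            fun hd => hd.2.2 ⟨y0, hy0, ha0, hgy0⟩
          rw [rho_of_else shape nu nd, hgx]
        · have nu : ¬ upC shape i g x := fun hu => by
            have := hu.2.1; rw [hgx] at this; exact hfi this
          have nd : ¬ dnC shape i g x := fun hd => by
            have := hd.2.1; rw [hgx] at this; exact hfi1 this
          rw [rho_of_else shape nu nd, hgx]

lemma isinc_adj_ne {d f} (h : IsInc shape d f) :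
    ∀ x y, x ∈ shape → y ∈ shape → adj x y → f x ≠ f y := by
  rintro ⟨a, b⟩ ⟨c, e⟩ hx hy (⟨h1, h2 | h2⟩ | ⟨h1, h2 | h2⟩) <;> dsimp at h1 h2 <;>
    subst h2 <;> subst h1
  · exact (h.2.1 _ _ hy hx).ne'
  · exact (h.2.1 _ _ hx hy).ne
  · exact (h.2.2.1 _ _ hy hx).ne'
  · exact (h.2.2.1 _ _ hx hy).ne

lemma rho_lt {d i f} (h : IsInc shape d f) {x y} (hx : x ∈ shape) (hy : y ∈ shape)
    (ha : adj x y) (hlt : f x < f y) : rho shape i f x < rho shape i f y := by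
  by_cases Ax : upC shape i f x
  · have hfx := Ax.2.1
    have hvy : f y ≠ i + 1 := fun hv => Ax.2.2 ⟨y, hy, ha, hv⟩
    have nuy : ¬ upC shape i f y := fun hu => by have := hu.2.1; omega
    have ndy : ¬ dnC shape i f y := fun hd => by have := hd.2.1; omega
    rw [rho_of_upC shape Ax, rho_of_else shape nuy ndy]; omega
  · by_cases Bx : dnC shape i f x
    · have hfx := Bx.2.1
      have nuy : ¬ upC shape i f y := fun hu => by have := hu.2.1; omega
      have ndy : ¬ dnC shape i f y := fun hd => by have := hd.2.1; omega
      rw [rho_of_dnC shape Bx, rho_of_else shape nuy ndy]; omega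
    · rw [rho_of_else shape Ax Bx]
      by_cases Ay : upC shape i f y
      · have := Ay.2.1; rw [rho_of_upC shape Ay]; omega
      · by_cases By : dnC shape i f y
        · have hfy := By.2.1
          have hfx : f x ≠ i := fun hv => By.2.2 ⟨x, hx, adj_symm ha, hv⟩
          rw [rho_of_dnC shape By]; omega
        · rw [rho_of_else shape Ay By]; exact hlt

lemma rho_isinc {d i : ℕ} {f} (h : IsInc shape d f) (hi1 : 1 ≤ i)
    (hi2 : i + 1 ≤ d) : IsInc shape d (rho shape i f) := by
  obtain ⟨h0, hrow, hcol, hbd, hsurj⟩ := h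
  have h' : IsInc shape d f := ⟨h0, hrow, hcol, hbd, hsurj⟩
  refine ⟨?_, ?_, ?_, ?_, ?_⟩
  · intro x hx; rw [rho_not_mem shape hx]; exact h0 x hx
  · intro a b h1 h2
    exact rho_lt shape h' h1 h2 (Or.inl ⟨rfl, Or.inr rfl⟩) (hrow a b h1 h2)
  · intro a b h1 h2
    exact rho_lt shape h' h1 h2 (Or.inr ⟨rfl, Or.inr rfl⟩) (hcol a b h1 h2)
  · intro x hx
    unfold rho
    split_ifs with a b
    · omega
    · omega
    · exact hbd x hx
  · intro v hv1 hv2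
    by_cases hvi : v ≠ i ∧ v ≠ i + 1
    · obtain ⟨x, hx, hfx⟩ := hsurj v hv1 hv2
      exact ⟨x, hx, (rho_eq_iff shape hvi.1 hvi.2 f x).2 hfx⟩
    · obtain ⟨x, hx, hfx⟩ := hsurj i hi1 (by omega)
      obtain ⟨w, hw, hfw⟩ := hsurj (i + 1) (by omega) hi2
      rcases (by tauto : v = i ∨ v = i + 1) with hveq | hveq <;> subst v
      · by_cases Ex : ∃ y ∈ shape, adj x y ∧ f y = i + 1
        · have nu : ¬ upC shape i f x := fun hu => hu.2.2 Ex
          have nd : ¬ dnC shape i f x := fun hd => by have := hd.2.1; omega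
          exact ⟨x, hx, by rw [rho_of_else shape nu nd, hfx]⟩
        · by_cases Ew : ∃ y ∈ shape, adj w y ∧ f y = i
          · obtain ⟨y0, hy0, ha0, hv0⟩ := Ew
            have nu : ¬ upC shape i f y0 :=
              fun hu => hu.2.2 ⟨w, hw, adj_symm ha0, hfw⟩
            have nd : ¬ dnC shape i f y0 := fun hd => by have := hd.2.1; omega
            exact ⟨y0, hy0, by rw [rho_of_else shape nu nd, hv0]⟩
          · exact ⟨w, hw, by rw [rho_of_dnC shape ⟨hw, hfw, Ew⟩]⟩
      · by_cases Ew : ∃ y ∈ shape, adj w y ∧ f y = i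
        · have nu : ¬ upC shape i f w := fun hu => by have := hu.2.1; omega
          have nd : ¬ dnC shape i f w := fun hd => hd.2.2 Ew
          exact ⟨w, hw, by rw [rho_of_else shape nu nd, hfw]⟩
        · by_cases Ex2 : ∃ y ∈ shape, adj x y ∧ f y = i + 1
          · obtain ⟨y0, hy0, ha0, hv0⟩ := Ex2
            have nd : ¬ dnC shape i f y0 :=
              fun hd => hd.2.2 ⟨x, hx, adj_symm ha0, hfx⟩
            have nu : ¬ upC shape i f y0 := fun hu => by have := hu.2.1; omega
            exact ⟨y0, hy0, by rw [rho_of_else shape nu nd, hv0]⟩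
          · exact ⟨x, hx, by rw [rho_of_upC shape ⟨hx, hfx, Ex2⟩]⟩

def applyw (w : List ℕ) (f : ℕ × ℕ → ℕ) : ℕ × ℕ → ℕ :=
  w.foldl (fun g i => rho shape i g) f

@[simp] lemma applyw_nil (f) : applyw shape [] f = f := rfl
lemma applyw_cons (a : ℕ) (w : List ℕ) (f) :
    applyw shape (a :: w) f = applyw shape w (rho shape a f) := rfl
lemma applyw_append (w1 w2 : List ℕ) (f) :
    applyw shape (w1 ++ w2) f = applyw shape w2 (applyw shape w1 f) := by
  unfold applyw; rw [List.foldl_append]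

lemma applyw_not_mem {x} (hx : x ∉ shape) (w : List ℕ) :
    ∀ f, applyw shape w f x = f x := by
  induction w with
  | nil => intro f; rfl
  | cons a t ih =>
    intro f; rw [applyw_cons, ih, rho_not_mem shape hx]

lemma applyw_le_iff {j : ℕ} (w : List ℕ) (hw : ∀ i ∈ w, i ≠ j) :
    ∀ f x, (applyw shape w f x ≤ j ↔ f x ≤ j) := by
  induction w with
  | nil => intro f x; rfl
  | cons a t ih =>
    intro f x
    rw [applyw_cons, ih (fun i hi => hw i (List.mem_cons_of_mem a hi)),
      rho_le_iff shape (hw a (List.mem_cons_self))]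

lemma applyw_comm {j : ℕ} (w : List ℕ) (hw : ∀ i ∈ w, i + 2 ≤ j ∨ j + 2 ≤ i) :
    ∀ f, applyw shape w (rho shape j f) = rho shape j (applyw shape w f) := by
  induction w with
  | nil => intro f; rfl
  | cons a t ih =>
    intro f
    rw [applyw_cons, applyw_cons]
    have : rho shape a (rho shape j f) = rho shape j (rho shape a f) := by
      rcases hw a (List.mem_cons_self) with h | h
      · exact rho_comm shape h f
      · exact (rho_comm shape h f).symm
    rw [this, ih (fun i hi => hw i (List.mem_cons_of_mem a hi))]

lemma applyw_swap (w1 w2 : List ℕ)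
    (hw : ∀ i ∈ w1, ∀ j ∈ w2, i + 2 ≤ j ∨ j + 2 ≤ i) (f) :
    applyw shape (w1 ++ w2) f = applyw shape (w2 ++ w1) f := by
  induction w1 generalizing f with
  | nil => rw [List.append_nil]; rfl
  | cons a s ih =>
    rw [List.cons_append, applyw_cons,
      ih (fun i hi j hj => hw i (List.mem_cons_of_mem a hi) j hj),
      applyw_append,
      applyw_comm shape w2 (fun j hj => (hw a (List.mem_cons_self) j hj).symm),
      applyw_append, applyw_cons]

lemma applyw_isinc {d : ℕ} (w : List ℕ) (hw : ∀ i ∈ w, 1 ≤ i ∧ i + 1 ≤ d) :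
    ∀ f, IsInc shape d f → IsInc shape d (applyw shape w f) := by
  induction w with
  | nil => intro f hf; exact hf
  | cons a t ih =>
    intro f hf
    rw [applyw_cons]
    exact ih (fun i hi => hw i (List.mem_cons_of_mem a hi))
      _ (rho_isinc shape hf (hw a (List.mem_cons_self)).1
        (hw a (List.mem_cons_self)).2)

def cw (k : ℕ) : List ℕ := List.range' 1 k
def rvw (k : ℕ) : List ℕ := (cw k).reverse
def epsw : ℕ → List ℕ
  | 0 => []
  | k + 1 => cw k ++ epsw k

lemma mem_cw {i k : ℕ} : i ∈ cw k ↔ 1 ≤ i ∧ i ≤ k := by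
  unfold cw; rw [List.mem_range'_1]; omega

lemma cw_succ (k : ℕ) : cw (k + 1) = cw k ++ [k + 1] := by
  unfold cw; rw [List.range'_concat]; simp [Nat.add_comm]

lemma rvw_succ (k : ℕ) : rvw (k + 1) = (k + 1) :: rvw k := by
  unfold rvw; rw [cw_succ, List.reverse_append]; rfl

lemma mem_rvw {i k : ℕ} : i ∈ rvw k ↔ 1 ≤ i ∧ i ≤ k := by
  unfold rvw; rw [List.mem_reverse]; exact mem_cw

lemma mem_epsw {i k : ℕ} (h : i ∈ epsw k) : 1 ≤ i ∧ i + 1 ≤ k := by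
  induction k with
  | zero => simp [epsw] at h
  | succ n ih =>
    rw [epsw, List.mem_append] at h
    rcases h with h | h
    · have := mem_cw.1 h; omega
    · have := ih h; omega

lemma mem_cw_letters {k d : ℕ} (hk : k + 1 ≤ d) :
    ∀ i ∈ cw k, 1 ≤ i ∧ i + 1 ≤ d := fun i hi => by
  have := mem_cw.1 hi; omega

lemma mem_rvw_letters {k d : ℕ} (hk : k + 1 ≤ d) :
    ∀ i ∈ rvw k, 1 ≤ i ∧ i + 1 ≤ d := fun i hi => by
  have := mem_rvw.1 hi; omega

lemma mem_epsw_letters {k d : ℕ} (hk : k ≤ d) :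
    ∀ i ∈ epsw k, 1 ≤ i ∧ i + 1 ≤ d := fun i hi => by
  have := mem_epsw hi; omega

lemma cancel_cr {d : ℕ} (k : ℕ) (hk : k + 1 ≤ d) :
    ∀ f, IsInc shape d f → applyw shape (cw k ++ rvw k) f = f := by
  induction k with
  | zero => intro f hf; rfl
  | succ k ih =>
    intro f hf
    have hg : IsInc shape d (applyw shape (cw k) f) :=
      applyw_isinc shape (cw k) (mem_cw_letters (by omega)) f hf
    rw [cw_succ, rvw_succ, applyw_append, applyw_append, applyw_cons,
      show applyw shape [k+1] (applyw shape (cw k) f)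
        = rho shape (k+1) (applyw shape (cw k) f) from rfl,
      rho_invol shape (isinc_adj_ne shape hg), ← applyw_append]
    exact ih (by omega) f hf

lemma cancel_rc {d : ℕ} (k : ℕ) (hk : k + 1 ≤ d) :
    ∀ f, IsInc shape d f → applyw shape (rvw k ++ cw k) f = f := by
  induction k with
  | zero => intro f hf; rfl
  | succ k ih =>
    intro f hf
    have hf2 : IsInc shape d (rho shape (k+1) f) :=
      rho_isinc shape hf (by omega) hk
    have e1 : rvw (k+1) ++ cw (k+1) = [k+1] ++ ((rvw k ++ cw k) ++ [k+1]) := by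
      rw [rvw_succ, cw_succ]; simp
    rw [e1, applyw_append, applyw_append,
      show applyw shape [k+1] f = rho shape (k+1) f from rfl,
      ih (by omega) _ hf2,
      show applyw shape [k+1] (rho shape (k+1) f)
        = rho shape (k+1) (rho shape (k+1) f) from rfl,
      rho_invol shape (isinc_adj_ne shape hf)]

lemma lemB {d : ℕ} (k : ℕ) (hk : k + 1 ≤ d) :
    ∀ f, IsInc shape d f →
      applyw shape (epsw k ++ cw k) f = applyw shape (rvw k ++ epsw k) f := by
  induction k with
  | zero => intro f hf; rfl
  | succ k ih =>
    intro f hf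
    have hg : IsInc shape d (applyw shape (cw k) f) :=
      applyw_isinc shape (cw k) (mem_cw_letters (by omega)) f hf
    have hf2 : IsInc shape d (rho shape (k+1) f) :=
      rho_isinc shape hf (by omega) hk
    have LHS : applyw shape (epsw (k+1) ++ cw (k+1)) f
        = applyw shape (epsw k) (rho shape (k+1) f) := by
      have e1 : epsw (k+1) ++ cw (k+1) = (cw k ++ (epsw k ++ cw k)) ++ [k+1] := by
        rw [show epsw (k+1) = cw k ++ epsw k from rfl, cw_succ]; simp
      rw [e1, applyw_append, applyw_append, ih (by omega) _ hg, applyw_append,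
        ← applyw_append shape (cw k) (rvw k) f, cancel_cr shape k (by omega) f hf,
        show applyw shape [k+1] (applyw shape (epsw k) f)
          = rho shape (k+1) (applyw shape (epsw k) f) from rfl,
        ← applyw_comm shape (epsw k) (fun i hi => by have := mem_epsw hi; omega)]
    have RHS : applyw shape (rvw (k+1) ++ epsw (k+1)) f
        = applyw shape (epsw k) (rho shape (k+1) f) := by
      have e2 : rvw (k+1) ++ epsw (k+1) = [k+1] ++ ((rvw k ++ cw k) ++ epsw k) := by
        rw [rvw_succ, show epsw (k+1) = cw k ++ epsw k from rfl]; simp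
      rw [e2, applyw_append, applyw_append,
        show applyw shape [k+1] f = rho shape (k+1) f from rfl,
        cancel_rc shape k (by omega) _ hf2]
    rw [LHS, RHS]

lemma lemA {d : ℕ} (k : ℕ) (hk : k ≤ d) :
    ∀ f, IsInc shape d f → applyw shape (epsw k ++ epsw k) f = f := by
  induction k with
  | zero => intro f hf; rfl
  | succ k ih =>
    intro f hf
    have hg : IsInc shape d (applyw shape (cw k) f) :=
      applyw_isinc shape (cw k) (mem_cw_letters hk) f hf
    have e1 : epsw (k+1) ++ epsw (k+1) = (cw k ++ (epsw k ++ cw k)) ++ epsw k := by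
      rw [show epsw (k+1) = cw k ++ epsw k from rfl]; simp
    rw [e1, applyw_append, applyw_append, lemB shape k hk _ hg, applyw_append,
      ← applyw_append shape (cw k) (rvw k) f, cancel_cr shape k hk f hf,
      ← applyw_append shape (epsw k) (epsw k) f]
    exact ih (by omega) f hf

lemma lemE {d : ℕ} (k : ℕ) (hk : k + 1 ≤ d) :
    ∀ f, IsInc shape d f →
      applyw shape (epsw (k+1) ++ cw k) f = applyw shape (epsw k) f := by
  intro f hf
  have hg : IsInc shape d (applyw shape (cw k) f) :=
    applyw_isinc shape (cw k) (mem_cw_letters (by omega)) f hf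
  have e1 : epsw (k+1) ++ cw k = cw k ++ (epsw k ++ cw k) := by
    rw [show epsw (k+1) = cw k ++ epsw k from rfl]; simp
  rw [e1, applyw_append, lemB shape k hk _ hg, applyw_append,
    ← applyw_append shape (cw k) (rvw k) f, cancel_cr shape k hk f hf]

def mrep (D : ℕ) : ℕ → List ℕ
  | 0 => []
  | m + 1 => mrep D m ++ cw D

lemma cw_split (a b : ℕ) : cw (a + b) = cw a ++ List.range' (a + 1) b := by
  unfold cw
  have h : List.range' 1 a 1 ++ List.range' (1 + 1 * a) b 1 = List.range' 1 (a + b) 1 :=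
    List.range'_append
  simp only [one_mul] at h
  rw [← h, Nat.add_comm 1 a]

lemma lemD {d : ℕ} (m : ℕ) (hm : m ≤ d) :
    ∃ β : List ℕ, (∀ i ∈ β, d - m + 1 ≤ i ∧ i ≤ d - 1) ∧
      ∀ f, IsInc shape d f →
        applyw shape (epsw d ++ mrep (d-1) m) f
          = applyw shape (epsw (d - m) ++ β) f := by
  induction m with
  | zero =>
    exact ⟨[], by simp, fun f hf => by simp [mrep]⟩
  | succ m ih =>
    obtain ⟨β, hβ, heq⟩ := ih (by omega)
    refine ⟨β ++ List.range' (d - m) m, ?_, ?_⟩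
    · intro i hi
      rcases List.mem_append.1 hi with h | h
      · have := hβ i h; omega
      · rw [List.mem_range'] at h; obtain ⟨t, ht, rfl⟩ := h; omega
    · intro f hf
      have e1 : epsw d ++ mrep (d-1) (m+1) = (epsw d ++ mrep (d-1) m) ++ cw (d-1) := by
        rw [show mrep (d-1) (m+1) = mrep (d-1) m ++ cw (d-1) from rfl]; simp
      rw [e1, applyw_append, heq f hf, ← applyw_append]
      have e2 : cw (d - 1) = cw (d - m - 1) ++ List.range' (d - m) m := by
        have h1 : d - 1 = (d - m - 1) + m := by omega
        rw [h1, cw_split]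
        congr 2
        omega
      have e3 : (epsw (d - m) ++ β) ++ cw (d - 1)
          = (epsw (d - m) ++ (β ++ cw (d - m - 1))) ++ List.range' (d - m) m := by
        rw [e2]; simp
      rw [e3]
      have hswap : applyw shape (β ++ cw (d - m - 1)) (applyw shape (epsw (d-m)) f)
          = applyw shape (cw (d - m - 1) ++ β) (applyw shape (epsw (d-m)) f) := by
        apply applyw_swap
        intro i hi j hj
        have h1 := hβ i hi
        have h2 := mem_cw.1 hj
        omega
      rw [applyw_append, applyw_append, hswap, applyw_append,
        ← applyw_append shape (epsw (d-m)) (cw (d - m - 1)) f]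
      have e4 : epsw (d - m) = epsw ((d - m - 1) + 1) := by congr 1; omega
      rw [e4, lemE shape (d - m - 1) (by omega) f hf]
      have e5 : d - m - 1 = d - (m + 1) := by omega
      rw [e5, ← applyw_append, ← applyw_append]

lemma chain {d : ℕ} (j : ℕ) (hj1 : 1 ≤ j) (hj2 : j ≤ d) (f)
    (hf : IsInc shape d f) (x) :
    applyw shape (mrep (d-1) (d-j)) f x ≤ j ↔ applyw shape (epsw d) f x ≤ j := by
  obtain ⟨β, hβ, heq⟩ := lemD (d := d) shape (d - j) (by omega)
  set E0 := applyw shape (epsw d) f with hE0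
  have hE0inc : IsInc shape d E0 :=
    applyw_isinc shape _ (mem_epsw_letters le_rfl) f hf
  have h2 := heq E0 hE0inc
  have h3 : applyw shape (epsw d) E0 = f := by
    rw [hE0, ← applyw_append]; exact lemA shape d le_rfl f hf
  rw [applyw_append, h3] at h2
  rw [h2, applyw_append,
    applyw_le_iff shape β (fun i hi => by have := hβ i hi; omega),
    applyw_le_iff shape (epsw (d - (d - j)))
      (fun i hi => by have := mem_epsw hi; omega)]

lemma rho_bd {d i : ℕ} {f} (hi1 : 1 ≤ i) (hi2 : i + 1 ≤ d)
    (hb : ∀ x ∈ shape, 1 ≤ f x ∧ f x ≤ d) :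
    ∀ x ∈ shape, 1 ≤ rho shape i f x ∧ rho shape i f x ≤ d := by
  intro x hx
  unfold rho
  split_ifs with a b
  · omega
  · omega
  · exact hb x hx

lemma applyw_bd {d : ℕ} (w : List ℕ) (hw : ∀ i ∈ w, 1 ≤ i ∧ i + 1 ≤ d) :
    ∀ f, (∀ x ∈ shape, 1 ≤ f x ∧ f x ≤ d) →
      ∀ x ∈ shape, 1 ≤ applyw shape w f x ∧ applyw shape w f x ≤ d := by
  induction w with
  | nil => intro f hb x hx; exact hb x hx
  | cons a t ih =>
    intro f hb x hx
    rw [applyw_cons]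
    exact ih (fun i hi => hw i (List.mem_cons_of_mem a hi)) (rho shape a f)
      (rho_bd shape (hw a (List.mem_cons_self)).1
        (hw a (List.mem_cons_self)).2 hb) x hx

lemma switch_invariant {d : ℕ} (f : ℕ × ℕ → ℕ)
    (hb : ∀ x ∈ shape, 1 ≤ f x ∧ f x ≤ d) (k : ℕ) :
    ∀ x ∈ shape,
      (List.range k).foldl (fun h i => kswitch shape (i + 2) h)
          (fun x => if f x = 1 then 0 else f x) x
        = (if applyw shape (cw k) f x = k + 1 then 0
           else if applyw shape (cw k) f x ≤ k then applyw shape (cw k) f x + 1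
           else applyw shape (cw k) f x) := by
  induction k with
  | zero =>
    intro x hx
    have hbx := hb x hx
    simp only [List.range_zero, List.foldl_nil]
    rw [show cw 0 = [] from rfl, applyw_nil]
    by_cases h1 : f x = 1
    · rw [if_pos h1, if_pos (by omega : f x = 0 + 1)]
    · rw [if_neg h1, if_neg (by omega : ¬ f x = 0 + 1),
        if_neg (by omega : ¬ f x ≤ 0)]
  | succ k ih =>
    intro x hx
    have hstep : (List.range (k+1)).foldl (fun h i => kswitch shape (i + 2) h)
        (fun x => if f x = 1 then 0 else f x)
        = kswitch shape (k + 2) ((List.range k).foldl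
            (fun h i => kswitch shape (i + 2) h)
            (fun x => if f x = 1 then 0 else f x)) := by
      rw [List.range_succ, List.foldl_append, List.foldl_cons, List.foldl_nil]
    have htstep : applyw shape (cw (k+1)) f
        = rho shape (k+1) (applyw shape (cw k) f) := by
      rw [cw_succ, applyw_append, applyw_cons, applyw_nil]
    set S := (List.range k).foldl (fun h i => kswitch shape (i + 2) h)
      (fun x => if f x = 1 then 0 else f x) with hS
    set u := applyw shape (cw k) f with hu
    have hs0 : ∀ y ∈ shape, (S y = 0 ↔ u y = k + 1) := by
      intro y hy; have h := ih y hy; split_ifs at h <;> omega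
    have hsk2 : ∀ y ∈ shape, (S y = k + 2 ↔ u y = k + 2) := by
      intro y hy; have h := ih y hy; split_ifs at h <;> omega
    have hE1 : (∃ y ∈ shape, adj x y ∧ S y = k + 2)
        ↔ (∃ y ∈ shape, adj x y ∧ u y = k + 2) := by
      constructor <;> rintro ⟨y, hy, ha, hv⟩
      · exact ⟨y, hy, ha, (hsk2 y hy).1 hv⟩
      · exact ⟨y, hy, ha, (hsk2 y hy).2 hv⟩
    have hE2 : (∃ y ∈ shape, adj x y ∧ S y = 0)
        ↔ (∃ y ∈ shape, adj x y ∧ u y = k + 1) := by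
      constructor <;> rintro ⟨y, hy, ha, hv⟩
      · exact ⟨y, hy, ha, (hs0 y hy).1 hv⟩
      · exact ⟨y, hy, ha, (hs0 y hy).2 hv⟩
    rw [hstep, htstep]
    by_cases hc1 : u x = k + 1
    · have hS0 : S x = 0 := (hs0 x hx).2 hc1
      by_cases E1 : ∃ y ∈ shape, adj x y ∧ u y = k + 2
      · have hsw : kswitch shape (k+2) S x = k + 2 := by
          unfold kswitch
          rw [if_pos ⟨hx, hS0, hE1.2 E1⟩]
        have hrho : rho shape (k+1) u x = u x :=
          rho_of_else shape (fun hup => hup.2.2 E1)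
            (fun hdn => by have := hdn.2.1; omega)
        rw [hsw, hrho, hc1, if_neg (by omega : ¬ k + 1 = k + 1 + 1),
          if_pos (by omega : k + 1 ≤ k + 1)]
      · have hsw : kswitch shape (k+2) S x = S x := by
          unfold kswitch
          rw [if_neg (fun hcc => E1 (hE1.1 hcc.2.2)),
            if_neg (fun hcc => by have := hcc.2.1; omega)]
        have hrho : rho shape (k+1) u x = k + 2 :=
          rho_of_upC shape ⟨hx, hc1, E1⟩
        rw [hsw, hrho, hS0, if_pos (rfl : k + 2 = k + 1 + 1)]
    · by_cases hc2 : u x = k + 2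
      · have hSk2 : S x = k + 2 := (hsk2 x hx).2 hc2
        by_cases E2 : ∃ y ∈ shape, adj x y ∧ u y = k + 1
        · have hsw : kswitch shape (k+2) S x = 0 := by
            unfold kswitch
            rw [if_neg (fun hcc => by have := hcc.2.1; omega),
              if_pos ⟨hx, hSk2, hE2.2 E2⟩]
          have hrho : rho shape (k+1) u x = u x := by
            apply rho_of_else
            · intro hup; have := hup.2.1; omega
            · exact fun hdn => hdn.2.2 E2
          rw [hsw, hrho, hc2, if_pos (rfl : k + 2 = k + 1 + 1)]
        · have hsw : kswitch shape (k+2) S x = S x := by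
            unfold kswitch
            rw [if_neg (fun hcc => by have := hcc.2.1; omega),
              if_neg (fun hcc => E2 (hE2.1 hcc.2.2))]
          have hrho : rho shape (k+1) u x = k + 1 :=
            rho_of_dnC shape ⟨hx, hc2, E2⟩
          rw [hsw, hrho, hSk2, if_neg (by omega : ¬ k + 1 = k + 1 + 1),
            if_pos (by omega : k + 1 ≤ k + 1)]
      · have hSx' : S x = if u x ≤ k then u x + 1 else u x := by
          have h := ih x hx; split_ifs at h ⊢ <;> omega
        have hsw : kswitch shape (k+2) S x = S x := by
          unfold kswitch
          rw [if_neg (fun hcc => by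
              have h1 := hcc.2.1; rw [hSx'] at h1; split_ifs at h1 <;> omega),
            if_neg (fun hcc => by
              have h1 := hcc.2.1; rw [hSx'] at h1; split_ifs at h1 <;> omega)]
        have hrho : rho shape (k+1) u x = u x := by
          apply rho_of_else
          · intro hup; have := hup.2.1; omega
          · intro hdn; have := hdn.2.1; omega
        rw [hsw, hrho, hSx', if_neg hc2]
        by_cases huk : u x ≤ k
        · rw [if_pos huk, if_pos (by omega : u x ≤ k + 1)]
        · rw [if_neg huk, if_neg (by omega : ¬ u x ≤ k + 1)]

lemma kpromote_eq_word {d : ℕ} (hd : 1 ≤ d) (f)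
    (h0 : ∀ x ∉ shape, f x = 0) (hb : ∀ x ∈ shape, 1 ≤ f x ∧ f x ≤ d) :
    kpromote shape d f = applyw shape (cw (d-1)) f := by
  funext x
  by_cases hx : x ∈ shape
  · have hinv := switch_invariant shape f hb (d-1) x hx
    have hbound := applyw_bd shape (cw (d-1)) (mem_cw_letters (by omega)) f hb x hx
    unfold kpromote
    rw [if_pos hx, hinv]
    set u := applyw shape (cw (d-1)) f x with hu
    by_cases hud : u = d - 1 + 1
    · rw [if_pos hud, if_pos rfl]; omega
    · rw [if_neg hud, if_pos (by omega : u ≤ d - 1),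
        if_neg (by omega : ¬ u + 1 = 0)]
      omega
  · unfold kpromote
    rw [if_neg hx, applyw_not_mem shape hx]
    exact (h0 x hx).symm

lemma kpromote_isinc {d : ℕ} (hd : 1 ≤ d) {f} (hf : IsInc shape d f) :
    IsInc shape d (kpromote shape d f) := by
  rw [kpromote_eq_word shape hd f hf.1 hf.2.2.2.1]
  exact applyw_isinc shape _ (mem_cw_letters (by omega)) f hf

lemma mem_mrep {D m i : ℕ} (h : i ∈ mrep D m) : i ∈ cw D := by
  induction m with
  | zero => simp [mrep] at h
  | succ n ih =>
    rw [show mrep D (n+1) = mrep D n ++ cw D from rfl, List.mem_append] at h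
    rcases h with h | h
    · exact ih h
    · exact h

lemma iter_word {d : ℕ} (hd : 1 ≤ d) (m : ℕ) {f} (hf : IsInc shape d f) :
    (kpromote shape d)^[m] f = applyw shape (mrep (d-1) m) f
      ∧ IsInc shape d ((kpromote shape d)^[m] f) := by
  induction m with
  | zero => exact ⟨rfl, hf⟩
  | succ m ih =>
    obtain ⟨he, hi⟩ := ih
    have hA : IsInc shape d (applyw shape (mrep (d-1) m) f) := he ▸ hi
    constructor
    · rw [Function.iterate_succ_apply', he,
        kpromote_eq_word shape hd _ hA.1 hA.2.2.2.1, ← applyw_append]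
      rfl
    · rw [Function.iterate_succ_apply']
      exact kpromote_isinc shape hd hi

lemma kevac_eq_word {d : ℕ} (hd : 1 ≤ d) {f} (hf : IsInc shape d f) :
    kevac shape d f = applyw shape (epsw d) f := by
  funext x
  set E := applyw shape (epsw d) f with hE
  have hEinc : IsInc shape d E :=
    applyw_isinc shape _ (mem_epsw_letters le_rfl) f hf
  by_cases hx : x ∈ shape
  · have hEx := hEinc.2.2.2.1 x hx
    have key : ∀ j, 1 ≤ j → j ≤ d →
        ((kpromote shape d)^[d - j] f x ≤ j ↔ E x ≤ j) := by
      intro j h1 h2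
      rw [(iter_word shape hd (d - j) hf).1]
      exact chain shape j h1 h2 f hf x
    unfold kevac
    rw [if_pos hx]
    have hne : ((Finset.Icc 1 d).filter
        fun j => (kpromote shape d)^[d - j] f x ≤ j).Nonempty := by
      refine ⟨d, Finset.mem_filter.2 ⟨Finset.mem_Icc.2 ⟨hd, le_rfl⟩, ?_⟩⟩
      rw [key d hd le_rfl]; exact hEx.2
    rw [dif_pos hne]
    apply le_antisymm
    · apply Finset.min'_le
      refine Finset.mem_filter.2 ⟨Finset.mem_Icc.2 ⟨hEx.1, hEx.2⟩, ?_⟩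
      rw [key (E x) hEx.1 hEx.2]
    · apply Finset.le_min'
      intro j hj
      obtain ⟨hj1, hj2⟩ := Finset.mem_filter.1 hj
      rw [Finset.mem_Icc] at hj1
      rwa [key j hj1.1 hj1.2] at hj2
  · unfold kevac
    rw [if_neg hx, hE, applyw_not_mem shape hx]
    exact (hf.1 x hx).symm

lemma conj_word {d : ℕ} (hd : 1 ≤ d) (f) (hf : IsInc shape d f) :
    applyw shape (cw (d-1)) (applyw shape (epsw d) (applyw shape (cw (d-1)) f))
      = applyw shape (epsw d) f := by
  obtain ⟨D, rfl⟩ : ∃ D, d = D + 1 := ⟨d - 1, by omega⟩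
  simp only [Nat.add_sub_cancel]
  have hg1 : IsInc shape (D+1) (applyw shape (cw D) f) :=
    applyw_isinc shape _ (mem_cw_letters le_rfl) f hf
  have hX : IsInc shape (D+1) (applyw shape (cw D) (applyw shape (cw D) f)) :=
    applyw_isinc shape _ (mem_cw_letters le_rfl) _ hg1
  rw [show epsw (D+1) = cw D ++ epsw D from rfl,
    applyw_append shape (cw D) (epsw D),
    ← applyw_append shape (epsw D) (cw D)
      (applyw shape (cw D) (applyw shape (cw D) f)),
    lemB shape D le_rfl _ hX,
    applyw_append shape (rvw D) (epsw D),
    ← applyw_append shape (cw D) (rvw D) (applyw shape (cw D) f),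
    cancel_cr shape D le_rfl _ hg1, applyw_append shape (cw D) (epsw D) f]


theorem stmt19 (μ : YoungDiagram) (q : ℕ) (hq : q < μ.cells.card)
    (T : ℕ × ℕ → ℕ) (hT : IsInc μ.cells (μ.cells.card - q) T) :
    kevac μ.cells (μ.cells.card - q) (kevac μ.cells (μ.cells.card - q) T) = T ∧
    kpromote μ.cells (μ.cells.card - q)
        (kevac μ.cells (μ.cells.card - q) (kpromote μ.cells (μ.cells.card - q) T)) =
      kevac μ.cells (μ.cells.card - q) T := by
  have hd : 1 ≤ μ.cells.card - q := by omega
  have hEinc : IsInc μ.cells (μ.cells.card - q)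
      (applyw μ.cells (epsw (μ.cells.card - q)) T) :=
    applyw_isinc μ.cells _ (mem_epsw_letters le_rfl) T hT
  constructor
  · rw [kevac_eq_word μ.cells hd hT, kevac_eq_word μ.cells hd hEinc,
      ← applyw_append]
    exact lemA μ.cells (μ.cells.card - q) le_rfl T hT
  · have h1 : kpromote μ.cells (μ.cells.card - q) T
        = applyw μ.cells (cw (μ.cells.card - q - 1)) T :=
      kpromote_eq_word μ.cells hd T hT.1 hT.2.2.2.1
    have hW1 : IsInc μ.cells (μ.cells.card - q)
        (applyw μ.cells (cw (μ.cells.card - q - 1)) T) :=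
      applyw_isinc μ.cells _ (mem_cw_letters (by omega)) T hT
    rw [h1, kevac_eq_word μ.cells hd hW1]
    have hW2 : IsInc μ.cells (μ.cells.card - q)
        (applyw μ.cells (epsw (μ.cells.card - q))
          (applyw μ.cells (cw (μ.cells.card - q - 1)) T)) :=
      applyw_isinc μ.cells _ (mem_epsw_letters le_rfl) _ hW1
    rw [kpromote_eq_word μ.cells hd _ hW2.1 hW2.2.2.2.1,
      kevac_eq_word μ.cells hd hT]
    exact conj_word μ.cells hd T hT

end Homomesy
end
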